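/- Let A be a locally finite hyperplane arrangement, ⊣ a valid order on chambers with minimal flats X_C, and C, E chambers. A Salvetti cell ⟨D,F⟩ lies in the fiber η_C⁻¹(E) (i.e. ⟨D,F⟩ ∈ N(C) and D^F = E) if and only if D = E^F, F ⊆ X_C, and supp(F) ⊆ s(C,E). -/

import Mathlib

open Metric Set MeasureTheory

noncomputable section

/-- A locally finite arrangement of affine hyperplanes in ℝⁿ, given by affine
equations `⟪a i, x⟫ = b i` with `a i ≠ 0`, indexed injectively by `ι`. -/
structure Arrangement (n : ℕ) (ι : Type) where
  a : ι → EuclideanSpace ℝ (Fin n)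
  b : ι → ℝ
  ha : ∀ i, a i ≠ 0
  inj : Function.Injective fun i => {x : EuclideanSpace ℝ (Fin n) | (inner ℝ (a i) x : ℝ) = b i}
  locFin : ∀ x : EuclideanSpace ℝ (Fin n), ∃ ε > 0,
    {i : ι | ∃ y ∈ Metric.ball x ε, (inner ℝ (a i) y : ℝ) = b i}.Finite

namespace Arrangement

variable {n : ℕ} {ι : Type} (A : Arrangement n ι)

/-- The defining affine functional of the `i`-th hyperplane. -/
def val (i : ι) (x : EuclideanSpace ℝ (Fin n)) : ℝ := (inner ℝ (A.a i) x : ℝ) - A.b i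

/-- The `i`-th hyperplane. -/
def hyperplane (i : ι) : Set (EuclideanSpace ℝ (Fin n)) := {x | A.val i x = 0}

/-- The sign vector of a point. -/
def signAt (x : EuclideanSpace ℝ (Fin n)) : ι → SignType := fun i => SignType.sign (A.val i x)

/-- The (relatively open) stratum with sign vector `σ`. -/
def openCell (σ : ι → SignType) : Set (EuclideanSpace ℝ (Fin n)) :=
  {x | ∀ i, SignType.sign (A.val i x) = σ i}

/-- The (closed) faces of the arrangement: closures of the strata. -/
def IsFace (F : Set (EuclideanSpace ℝ (Fin n))) : Prop :=
  ∃ x : EuclideanSpace ℝ (Fin n), F = closure (A.openCell (A.signAt x))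

/-- Chambers: closed faces of codimension 0. -/
def IsChamber (C : Set (EuclideanSpace ℝ (Fin n))) : Prop :=
  ∃ x : EuclideanSpace ℝ (Fin n), (∀ i, A.val i x ≠ 0) ∧
    C = closure (A.openCell (A.signAt x))

/-- The support of a subset: the hyperplanes containing it. -/
def supp (U : Set (EuclideanSpace ℝ (Fin n))) : Set ι := {i | U ⊆ A.hyperplane i}

/-- The set of hyperplanes separating two chambers. -/
def sep (C C' : Set (EuclideanSpace ℝ (Fin n))) : Set ι :=
  {i | ∀ x ∈ interior C, ∀ y ∈ interior C', A.val i x * A.val i y < 0}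

/-- `F` is a face of the chamber (or face) `C`. -/
def IsFaceOf (F C : Set (EuclideanSpace ℝ (Fin n))) : Prop := A.IsFace F ∧ F ⊆ C

/-- `A.IsCF C F D` means `D = C.F`: `D` is the unique chamber containing `F` and not
separated from `C` by any hyperplane of `supp F`. -/
def IsCF (C F D : Set (EuclideanSpace ℝ (Fin n))) : Prop :=
  A.IsChamber D ∧ F ⊆ D ∧ A.sep C D ∩ A.supp F = ∅

/-- `A.IsOpp D F E` means `E = D^F`: `E` is the chamber opposite to `D` with respect to
its face `F`, i.e. the hyperplanes separating `D` and `E` are exactly those containing `F`. -/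
def IsOpp (D F E : Set (EuclideanSpace ℝ (Fin n))) : Prop :=
  A.IsChamber E ∧ F ⊆ E ∧ A.sep D E = A.supp F

/-- Flats: nonempty intersections of subfamilies of hyperplanes (including ℝⁿ itself). -/
def IsFlat (X : Set (EuclideanSpace ℝ (Fin n))) : Prop :=
  X.Nonempty ∧ ∃ s : Set ι, X = ⋂ i ∈ s, A.hyperplane i

/-- A cell `⟨C, F⟩` of the Salvetti complex: a chamber `C` together with a face `F` of `C`. -/
structure Cell {n : ℕ} {ι : Type} (𝒜 : Arrangement n ι) where
  C : Set (EuclideanSpace ℝ (Fin n))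
  F : Set (EuclideanSpace ℝ (Fin n))
  isChamber : 𝒜.IsChamber C
  isFace : 𝒜.IsFace F
  faceLe : F ⊆ C

/-- The Salvetti order: `⟨C,F⟩ ≤ ⟨D,G⟩` iff `F ⪯ G` (i.e. `F ⊇ G`) and `D.F = C`. -/
def cellLE (c d : A.Cell) : Prop := d.F ⊆ c.F ∧ A.IsCF d.C c.F c.C

/-- The subcomplex `S(C)`: cells `⟨D,F⟩` with `D = C.F`. -/
def inS (C : Set (EuclideanSpace ℝ (Fin n))) (c : A.Cell) : Prop := A.IsCF C c.F c.C

/-- A strict total order on the chambers. -/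
def IsChamberOrder (lt : Set (EuclideanSpace ℝ (Fin n)) → Set (EuclideanSpace ℝ (Fin n)) → Prop) :
    Prop :=
  (∀ C C', A.IsChamber C → A.IsChamber C' → C ≠ C' → lt C C' ∨ lt C' C) ∧
  (∀ C, ¬ lt C C) ∧
  (∀ C C' C'', lt C C' → lt C' C'' → lt C C'')

/-- The upper ideal `J(C)` of the poset of flats determined by a total order on chambers. -/
def J (lt : Set (EuclideanSpace ℝ (Fin n)) → Set (EuclideanSpace ℝ (Fin n)) → Prop)
    (C : Set (EuclideanSpace ℝ (Fin n))) : Set (Set (EuclideanSpace ℝ (Fin n))) :=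
  {X | A.IsFlat X ∧ ∀ C', A.IsChamber C' → lt C' C → (A.supp X ∩ A.sep C C').Nonempty}

/-- A valid order: for each chamber `C`, the ideal `J(C)` is the principal upper ideal
(in the poset of flats ordered by reverse inclusion) generated by `X_C = |F_C|` for some
face `F_C` of `C`. -/
def IsValidOrder
    (lt : Set (EuclideanSpace ℝ (Fin n)) → Set (EuclideanSpace ℝ (Fin n)) → Prop) : Prop :=
  A.IsChamberOrder lt ∧
  ∀ C, A.IsChamber C → ∃ F_C, A.IsFaceOf F_C C ∧
    A.J lt C = {X | A.IsFlat X ∧ X ⊆ (affineSpan ℝ F_C : Set (EuclideanSpace ℝ (Fin n)))}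

/-- Membership in `N(C)`: cells of `S(C)` not lying in any earlier `S(C')`. -/
def inN (lt : Set (EuclideanSpace ℝ (Fin n)) → Set (EuclideanSpace ℝ (Fin n)) → Prop)
    (C : Set (EuclideanSpace ℝ (Fin n))) (c : A.Cell) : Prop :=
  A.inS C c ∧ ∀ C', A.IsChamber C' → lt C' C → ¬ A.inS C' c

/-- A point `x₀` is generic with respect to `A`: (i) chambers at equal distance from `x₀`
have the same metric projection of `x₀`, lying in their intersection; (ii) distances to
strictly comparable flats are strictly comparable. -/
def IsGeneric (x₀ : EuclideanSpace ℝ (Fin n)) : Prop :=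
  (∀ C C', A.IsChamber C → A.IsChamber C' → infDist x₀ C = infDist x₀ C' →
    ∀ p ∈ C, ∀ p' ∈ C', (∀ q ∈ C, dist x₀ p ≤ dist x₀ q) →
      (∀ q ∈ C', dist x₀ p' ≤ dist x₀ q) → p = p' ∧ p ∈ C ∩ C') ∧
  (∀ L L', A.IsFlat L → A.IsFlat L' → L' ⊂ L → infDist x₀ L < infDist x₀ L')

section AuxGeneral
variable {EE : Type*} [NormedAddCommGroup EE] [NormedSpace ℝ EE]

lemma sign_eq_of_no_zero' {f : EE → ℝ} (hf : Continuous f) {s : Set EE} (hs : Convex ℝ s)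
    (h0 : ∀ z ∈ s, f z ≠ 0) {x y : EE} (hx : x ∈ s) (hy : y ∈ s) :
    SignType.sign (f x) = SignType.sign (f y) := by
  have key : ∀ u v : EE, u ∈ s → v ∈ s → f u < 0 → 0 < f v → False := by
    intro u v hu hv hfu hfv
    set g : ℝ → ℝ := fun t => f ((1 - t) • u + t • v) with hg
    have hc : Continuous g := by fun_prop
    have hmem : (0:ℝ) ∈ Icc (g 0) (g 1) := by
      constructor <;> simp [hg] <;> [exact hfu.le; exact hfv.le]
    obtain ⟨t, ht, hgt⟩ := intermediate_value_Icc (zero_le_one) hc.continuousOn hmem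
    have : (1 - t) • u + t • v ∈ s := hs hu hv (by linarith [ht.2]) ht.1 (by ring)
    exact h0 _ this hgt
  rcases lt_trichotomy (f x) 0 with h | h | h <;> rcases lt_trichotomy (f y) 0 with h' | h' | h'
  · rw [sign_eq_neg_one_iff.2 h, sign_eq_neg_one_iff.2 h']
  · exact absurd h' (h0 y hy)
  · exact absurd (key x y hx hy h h') id
  · exact absurd h (h0 x hx)
  · exact absurd h (h0 x hx)
  · exact absurd h (h0 x hx)
  · exact absurd (key y x hy hx h' h) id
  · exact absurd h' (h0 y hy)
  · rw [sign_eq_one_iff.2 h, sign_eq_one_iff.2 h']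

end AuxGeneral

lemma val_continuous (i : ι) : Continuous (A.val i) := by
  unfold val
  exact (continuous_const.inner continuous_id).sub continuous_const

lemma val_combo (i : ι) (x y : EuclideanSpace ℝ (Fin n)) (t : ℝ) :
    A.val i (x + t • (y - x)) = A.val i x + t * (A.val i y - A.val i x) := by
  unfold val
  rw [inner_add_right, real_inner_smul_right, inner_sub_right]
  ring

lemma mem_openCell_signAt (x : EuclideanSpace ℝ (Fin n)) : x ∈ A.openCell (A.signAt x) :=
  fun _ => rfl

lemma exists_stable_ball (x : EuclideanSpace ℝ (Fin n)) :
    ∃ ε > 0, ∃ S : Set ι, S.Finite ∧ ∀ i ∉ S, A.val i x ≠ 0 ∧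
      ∀ y ∈ Metric.ball x ε, SignType.sign (A.val i y) = SignType.sign (A.val i x) := by
  obtain ⟨ε, hε, hfin⟩ := A.locFin x
  refine ⟨ε, hε, _, hfin, fun i hi => ?_⟩
  have hnz : ∀ y ∈ Metric.ball x ε, A.val i y ≠ 0 := by
    intro y hy h
    exact hi ⟨y, hy, by simpa [Arrangement.val, sub_eq_zero] using h⟩
  exact ⟨hnz x (Metric.mem_ball_self hε), fun y hy =>
    sign_eq_of_no_zero' (A.val_continuous i) (convex_ball x ε) hnz hy (Metric.mem_ball_self hε)⟩

lemma isOpen_sign_eq (i : ι) (s : SignType) (hs : s ≠ 0) :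
    IsOpen {y : EuclideanSpace ℝ (Fin n) | SignType.sign (A.val i y) = s} := by
  rcases s with _ | _ | _
  · exact absurd rfl hs
  · have : {y : EuclideanSpace ℝ (Fin n) | SignType.sign (A.val i y) = SignType.neg}
        = {y | A.val i y < 0} := by
      ext y; simp [sign_eq_neg_one_iff]
    rw [this]
    exact isOpen_lt (A.val_continuous i) continuous_const
  · have : {y : EuclideanSpace ℝ (Fin n) | SignType.sign (A.val i y) = SignType.pos}
        = {y | 0 < A.val i y} := by
      ext y; simp [sign_eq_one_iff]
    rw [this]
    exact isOpen_lt continuous_const (A.val_continuous i)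

lemma isOpen_openCell {σ : ι → SignType} (hσ : ∀ i, σ i ≠ 0) : IsOpen (A.openCell σ) := by
  rw [isOpen_iff_forall_mem_open]
  intro x hx
  obtain ⟨ε, hε, S, hS, hstab⟩ := A.exists_stable_ball x
  refine ⟨Metric.ball x ε ∩ ⋂ i ∈ S, {y | SignType.sign (A.val i y) = σ i}, ?_, ?_, ?_⟩
  · rintro y ⟨hyb, hyi⟩ i
    by_cases hi : i ∈ S
    · exact (Set.mem_iInter₂.1 hyi) i hi
    · rw [(hstab i hi).2 y hyb]; exact hx i
  · exact IsOpen.inter Metric.isOpen_ball (hS.isOpen_biInter fun i _ => A.isOpen_sign_eq i (σ i) (hσ i))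
  · exact ⟨Metric.mem_ball_self hε, Set.mem_iInter₂.2 fun i _ => hx i⟩

lemma closure_openCell_subset (σ : ι → SignType) (i : ι) :
    closure (A.openCell σ) ⊆ {x | 0 ≤ (σ i : ℝ) * A.val i x} := by
  apply closure_minimal
  · intro z hz
    have := hz i
    rcases hσi : σ i with _ | _ | _ <;> rw [hσi] at this
    · have : A.val i z = 0 := sign_eq_zero_iff.1 this
      simp [this]
    · have : A.val i z < 0 := sign_eq_neg_one_iff.1 this
      simpa using by nlinarith
    · have : 0 < A.val i z := sign_eq_one_iff.1 this
      simpa using by nlinarith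
  · exact isClosed_le continuous_const (continuous_const.mul (A.val_continuous i))

lemma interior_subset_openCell {σ : ι → SignType} (hσ : ∀ i, σ i ≠ 0) :
    interior (closure (A.openCell σ)) ⊆ A.openCell σ := by
  intro x hx i
  have hball := mem_interior_iff_mem_nhds.1 hx
  obtain ⟨δ, hδ, hsub⟩ := Metric.mem_nhds_iff.1 hball
  have hge : ∀ z ∈ closure (A.openCell σ), 0 ≤ (σ i : ℝ) * A.val i z :=
    fun z hz => A.closure_openCell_subset σ i hz
  have hna : ‖A.a i‖ ≠ 0 := norm_ne_zero_iff.2 (A.ha i)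
  have hcsq : ((σ i : ℝ)) * (σ i : ℝ) = 1 := by
    rcases h : σ i with _ | _ | _
    · exact absurd h (hσ i)
    · norm_num
    · norm_num
  have hvx : A.val i x ≠ 0 := by
    intro h0
    set t : ℝ := δ / (2 * ‖A.a i‖) with ht
    have htpos : 0 < t := by positivity
    set x' : EuclideanSpace ℝ (Fin n) := x + (-((σ i : ℝ) * t)) • A.a i with hx'
    have hx'mem : x' ∈ Metric.ball x δ := by
      rw [Metric.mem_ball, dist_eq_norm, hx']
      have : x + (-((σ i : ℝ) * t)) • A.a i - x = (-((σ i : ℝ) * t)) • A.a i := by abel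
      rw [this, norm_smul]
      have habs : ‖(-((σ i : ℝ) * t))‖ = t := by
        rw [norm_neg, norm_mul]
        rcases h : σ i with _ | _ | _
        · exact absurd h (hσ i)
        · simp [abs_of_pos htpos]
        · simp [abs_of_pos htpos]
      rw [habs, ht]
      rw [div_mul_eq_mul_div, mul_comm]
      calc (‖A.a i‖ * δ) / (2 * ‖A.a i‖) = δ / 2 := by
            field_simp
        _ < δ := by linarith
    have hval : A.val i x' = -((σ i : ℝ) * t) * ‖A.a i‖ ^ 2 := by
      rw [hx']
      unfold Arrangement.val
      rw [inner_add_right, real_inner_smul_right, real_inner_self_eq_norm_sq]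
      unfold Arrangement.val at h0
      rw [sub_eq_zero] at h0
      rw [h0]; ring
    have := hge x' (hsub hx'mem)
    rw [hval] at this
    have : (σ i : ℝ) * (-((σ i : ℝ) * t) * ‖A.a i‖ ^ 2) = -(t * ‖A.a i‖ ^ 2) := by
      nlinarith [hcsq]
    nlinarith [this, hge x' (hsub hx'mem), hcsq, sq_nonneg ‖A.a i‖,
      mul_pos htpos (pow_pos (lt_of_le_of_ne (norm_nonneg _) (Ne.symm hna)) 2)]
  have hx0 := hge x (interior_subset hx)
  rcases h : σ i with _ | _ | _
  · exact absurd h (hσ i)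
  · rw [h] at hx0
    rw [show SignType.neg = (-1 : SignType) from rfl, sign_eq_neg_one_iff]
    simp at hx0
    rcases lt_or_eq_of_le hx0 with h1 | h1
    · exact h1
    · exact absurd h1 hvx
  · rw [h] at hx0
    rw [show SignType.pos = (1 : SignType) from rfl, sign_eq_one_iff]
    simp at hx0
    rcases lt_or_eq_of_le hx0 with h1 | h1
    · exact h1
    · exact absurd h1.symm hvx

lemma combo_mem_openCell {σ τ : ι → SignType} (compat : ∀ i, τ i = 0 ∨ τ i = σ i)
    {x y : EuclideanSpace ℝ (Fin n)} (hx : x ∈ A.openCell τ) (hy : y ∈ A.openCell σ)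
    {t : ℝ} (ht0 : 0 < t) (ht1 : t ≤ 1) : x + t • (y - x) ∈ A.openCell σ := by
  intro i
  rw [A.val_combo]
  rcases hs : σ i with _ | _ | _
  · have hτ : τ i = 0 := by rcases compat i with h | h; exact h; rw [h, hs]; rfl
    have h1 : A.val i x = 0 := sign_eq_zero_iff.1 (by rw [hx i, hτ])
    have h2 : A.val i y = 0 := sign_eq_zero_iff.1 (by rw [hy i, hs]; rfl)
    rw [h1, h2]; simp
  · have h2 : A.val i y < 0 := sign_eq_neg_one_iff.1 (by rw [hy i, hs]; rfl)
    have h1 : A.val i x ≤ 0 := by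
      rcases compat i with h | h
      · exact le_of_eq (sign_eq_zero_iff.1 (by rw [hx i, h]))
      · exact le_of_lt (sign_eq_neg_one_iff.1 (by rw [hx i, h, hs]; rfl))
    rw [show SignType.neg = (-1 : SignType) from rfl, sign_eq_neg_one_iff]
    nlinarith
  · have h2 : 0 < A.val i y := sign_eq_one_iff.1 (by rw [hy i, hs]; rfl)
    have h1 : 0 ≤ A.val i x := by
      rcases compat i with h | h
      · exact ge_of_eq (sign_eq_zero_iff.1 (by rw [hx i, h]))
      · exact le_of_lt (sign_eq_one_iff.1 (by rw [hx i, h, hs]; rfl))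
    rw [show SignType.pos = (1 : SignType) from rfl, sign_eq_one_iff]
    nlinarith

lemma openCell_subset_closure {σ τ : ι → SignType} (compat : ∀ i, τ i = 0 ∨ τ i = σ i)
    {y : EuclideanSpace ℝ (Fin n)} (hy : y ∈ A.openCell σ) :
    A.openCell τ ⊆ closure (A.openCell σ) := by
  intro x hx
  have htd : Filter.Tendsto (fun t : ℝ => x + t • (y - x)) (nhdsWithin 0 (Set.Ioi 0)) (nhds x) := by
    have : Filter.Tendsto (fun t : ℝ => x + t • (y - x)) (nhds 0) (nhds x) := by
      have hcont : Continuous fun t : ℝ => x + t • (y - x) := by fun_prop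
      have := hcont.tendsto 0
      simpa using this
    exact this.mono_left nhdsWithin_le_nhds
  refine mem_closure_of_tendsto htd ?_
  filter_upwards [Ioc_mem_nhdsGT_of_mem (Set.left_mem_Ico.2 zero_lt_one)] with t ht
  exact A.combo_mem_openCell compat hx hy ht.1 ht.2

lemma signAt_ne_zero {x₀ : EuclideanSpace ℝ (Fin n)} (hx₀ : ∀ i, A.val i x₀ ≠ 0) (i : ι) :
    A.signAt x₀ i ≠ 0 := fun h => hx₀ i (sign_eq_zero_iff.1 h)

lemma openCell_subset_interior {σ : ι → SignType} (hσ : ∀ i, σ i ≠ 0) :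
    A.openCell σ ⊆ interior (closure (A.openCell σ)) :=
  interior_maximal subset_closure (A.isOpen_openCell hσ)

lemma sign_of_mem_interior {x₀ : EuclideanSpace ℝ (Fin n)} (hx₀ : ∀ i, A.val i x₀ ≠ 0)
    {u : EuclideanSpace ℝ (Fin n)}
    (hu : u ∈ interior (closure (A.openCell (A.signAt x₀)))) (i : ι) :
    SignType.sign (A.val i u) = A.signAt x₀ i :=
  A.interior_subset_openCell (A.signAt_ne_zero hx₀) hu i

lemma mem_sep_iff {x₀ x₁ : EuclideanSpace ℝ (Fin n)} (hx₀ : ∀ i, A.val i x₀ ≠ 0)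
    (hx₁ : ∀ i, A.val i x₁ ≠ 0) (i : ι) :
    i ∈ A.sep (closure (A.openCell (A.signAt x₀))) (closure (A.openCell (A.signAt x₁))) ↔
      A.signAt x₀ i ≠ A.signAt x₁ i := by
  constructor
  · intro hsep heq
    have h1 := hsep x₀ (A.openCell_subset_interior (A.signAt_ne_zero hx₀) (A.mem_openCell_signAt x₀))
      x₁ (A.openCell_subset_interior (A.signAt_ne_zero hx₁) (A.mem_openCell_signAt x₁))
    have e0 : SignType.sign (A.val i x₀) = SignType.sign (A.val i x₁) := heq
    rcases lt_trichotomy (A.val i x₀) 0 with h | h | h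
    · have : A.val i x₁ < 0 := by
        rw [← sign_eq_neg_one_iff, ← e0, sign_eq_neg_one_iff]; exact h
      nlinarith
    · exact hx₀ i h
    · have : 0 < A.val i x₁ := by
        rw [← sign_eq_one_iff, ← e0, sign_eq_one_iff]; exact h
      nlinarith
  · intro hne u hu v hv
    have su := A.sign_of_mem_interior hx₀ hu i
    have sv := A.sign_of_mem_interior hx₁ hv i
    rcases h0 : A.signAt x₀ i with _ | _ | _ <;> rcases h1 : A.signAt x₁ i with _ | _ | _ <;>
      rw [h0] at su <;> rw [h1] at sv
    · exact absurd h0 (A.signAt_ne_zero hx₀ i)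
    · exact absurd h0 (A.signAt_ne_zero hx₀ i)
    · exact absurd h0 (A.signAt_ne_zero hx₀ i)
    · exact absurd h1 (A.signAt_ne_zero hx₁ i)
    · exact absurd (h0.trans h1.symm) (by rw [h0] at hne; rw [h1] at hne; exact fun _ => hne rfl)
    · have hu' : A.val i u < 0 := sign_eq_neg_one_iff.1 (by rw [su]; rfl)
      have hv' : 0 < A.val i v := sign_eq_one_iff.1 (by rw [sv]; rfl)
      exact mul_neg_of_neg_of_pos hu' hv'
    · exact absurd h1 (A.signAt_ne_zero hx₁ i)
    · have hu' : 0 < A.val i u := sign_eq_one_iff.1 (by rw [su]; rfl)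
      have hv' : A.val i v < 0 := sign_eq_neg_one_iff.1 (by rw [sv]; rfl)
      exact mul_neg_of_pos_of_neg hu' hv'
    · exact absurd (h0.trans h1.symm) (by rw [h0] at hne; rw [h1] at hne; exact fun _ => hne rfl)

lemma supp_face (z : EuclideanSpace ℝ (Fin n)) :
    A.supp (closure (A.openCell (A.signAt z))) = {i | A.signAt z i = 0} := by
  ext i
  constructor
  · intro hsupp
    have hz : z ∈ closure (A.openCell (A.signAt z)) :=
      subset_closure (A.mem_openCell_signAt z)
    have := hsupp hz
    exact sign_eq_zero_iff.2 this
  · intro h0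
    have hsub : A.openCell (A.signAt z) ⊆ A.hyperplane i := by
      intro w hw
      exact sign_eq_zero_iff.1 (by rw [hw i, h0])
    exact closure_minimal hsub (isClosed_eq (A.val_continuous i) continuous_const)

lemma compat_of_face_subset {z x₀ : EuclideanSpace ℝ (Fin n)} (hx₀ : ∀ i, A.val i x₀ ≠ 0)
    (hsub : closure (A.openCell (A.signAt z)) ⊆ closure (A.openCell (A.signAt x₀))) (i : ι) :
    A.signAt z i = 0 ∨ A.signAt z i = A.signAt x₀ i := by
  by_cases h0 : A.signAt z i = 0
  · exact Or.inl h0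
  right
  have hz : z ∈ closure (A.openCell (A.signAt x₀)) :=
    hsub (subset_closure (A.mem_openCell_signAt z))
  have hge := A.closure_openCell_subset (A.signAt x₀) i hz
  have hvz : A.val i z ≠ 0 := fun h => h0 (sign_eq_zero_iff.2 h)
  rcases hs : A.signAt x₀ i with _ | _ | _
  · exact absurd hs (A.signAt_ne_zero hx₀ i)
  · rw [hs] at hge
    have : A.val i z < 0 := by
      have hge2 : (0:ℝ) ≤ -A.val i z := by simpa using hge
      rcases lt_or_eq_of_le hge2 with h | h
      · linarith
      · exact absurd (by linarith : A.val i z = 0) hvz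
    show SignType.sign (A.val i z) = SignType.neg
    rw [show SignType.neg = (-1 : SignType) from rfl, sign_eq_neg_one_iff]
    exact this
  · rw [hs] at hge
    have : 0 < A.val i z := by
      have hge2 : (0:ℝ) ≤ A.val i z := by simpa using hge
      rcases lt_or_eq_of_le hge2 with h | h
      · exact h
      · exact absurd h.symm hvz
    show SignType.sign (A.val i z) = SignType.pos
    rw [show SignType.pos = (1 : SignType) from rfl, sign_eq_one_iff]
    exact this

lemma face_subset_of_compat {z x₀ : EuclideanSpace ℝ (Fin n)}
    (compat : ∀ i, A.signAt z i = 0 ∨ A.signAt z i = A.signAt x₀ i) :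
    closure (A.openCell (A.signAt z)) ⊆ closure (A.openCell (A.signAt x₀)) :=
  closure_minimal (A.openCell_subset_closure compat (A.mem_openCell_signAt x₀)) isClosed_closure

lemma flat_subset_span (z : EuclideanSpace ℝ (Fin n)) :
    {x | ∀ i, A.signAt z i = 0 → A.val i x = 0} ⊆
      (affineSpan ℝ (A.openCell (A.signAt z)) : Set (EuclideanSpace ℝ (Fin n))) := by
  intro y hy
  obtain ⟨ε, hε, S, hSfin, hstab⟩ := A.exists_stable_ball z
  set τ := A.signAt z with hτ
  set U : Set (EuclideanSpace ℝ (Fin n)) :=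
    Metric.ball z ε ∩ ⋂ i ∈ (S ∩ {i | τ i ≠ 0}), {w | SignType.sign (A.val i w) = τ i} with hU
  have hUopen : IsOpen U :=
    Metric.isOpen_ball.inter ((hSfin.inter_of_left _).isOpen_biInter
      fun i hi => A.isOpen_sign_eq i (τ i) hi.2)
  have hzU : z ∈ U :=
    ⟨Metric.mem_ball_self hε, Set.mem_iInter₂.2 fun i _ => rfl⟩
  have htd : Filter.Tendsto (fun t : ℝ => z + t • (y - z)) (nhdsWithin 0 (Set.Ioi 0)) (nhds z) := by
    have hcont : Continuous fun t : ℝ => z + t • (y - z) := by fun_prop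
    have := hcont.tendsto 0
    simp only [zero_smul, add_zero] at this
    exact this.mono_left nhdsWithin_le_nhds
  have hev : ∀ᶠ t in nhdsWithin (0:ℝ) (Set.Ioi 0), z + t • (y - z) ∈ U :=
    htd.eventually (hUopen.mem_nhds hzU)
  have hev2 : ∀ᶠ t in nhdsWithin (0:ℝ) (Set.Ioi 0), t ∈ Set.Ioi (0:ℝ) := self_mem_nhdsWithin
  obtain ⟨t₀, hmem, ht₀⟩ := (hev.and hev2).exists
  have hzt : z + t₀ • (y - z) ∈ A.openCell τ := by
    intro i
    by_cases hiS : i ∈ S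
    · by_cases hτi : τ i = 0
      · have h1 : A.val i z = 0 := sign_eq_zero_iff.1 (by rw [← hτi]; rfl)
        have h2 : A.val i y = 0 := hy i hτi
        rw [A.val_combo, h1, h2, hτi]
        simp
      · exact Set.mem_iInter₂.1 hmem.2 i ⟨hiS, hτi⟩
    · rw [(hstab i hiS).2 _ hmem.1]; rfl
  have h1 : z ∈ affineSpan ℝ (A.openCell τ) := subset_affineSpan ℝ _ (A.mem_openCell_signAt z)
  have h2 : z + t₀ • (y - z) ∈ affineSpan ℝ (A.openCell τ) := subset_affineSpan ℝ _ hzt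
  have key := AffineSubspace.smul_vsub_vadd_mem (affineSpan ℝ (A.openCell τ)) (1 / t₀) h2 h1 h1
  have heq : (1 / t₀) • (z + t₀ • (y - z) -ᵥ z) +ᵥ z = y := by
    have ht0 : t₀ ≠ 0 := ne_of_gt ht₀
    simp only [vsub_eq_sub, vadd_eq_add]
    have : z + t₀ • (y - z) - z = t₀ • (y - z) := by abel
    rw [this, smul_smul, one_div, inv_mul_cancel₀ ht0, one_smul]
    abel
  rw [heq] at key
  exact key

lemma sep_comm (P Q : Set (EuclideanSpace ℝ (Fin n))) : A.sep P Q = A.sep Q P := by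
  ext i
  constructor <;> intro h y hy x hx <;> rw [mul_comm] <;> exact h x hx y hy

lemma signType_eq_of {s t u : SignType} (hs : s ≠ 0) (ht : t ≠ 0) (hu : u ≠ 0)
    (hsu : s ≠ u) (htu : t ≠ u) : s = t := by
  rcases s with _ | _ | _ <;> rcases t with _ | _ | _ <;> rcases u with _ | _ | _ <;> simp_all

end Arrangement

/-- Characterization of the fiber `η_C⁻¹(E)`: a Salvetti cell `⟨D,F⟩` satisfies
`⟨D,F⟩ ∈ N(C)` and `D^F = E` iff `D = E^F`, `F ⊆ X_C` and `supp(F) ⊆ s(C,E)`. -/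
theorem stmt9 {n : ℕ} {ι : Type} (A : Arrangement n ι)
    (lt : Set (EuclideanSpace ℝ (Fin n)) → Set (EuclideanSpace ℝ (Fin n)) → Prop)
    (hvalid : A.IsValidOrder lt)
    (C E F_C : Set (EuclideanSpace ℝ (Fin n)))
    (hC : A.IsChamber C) (hE : A.IsChamber E) (hFC : A.IsFaceOf F_C C)
    (hJ : A.J lt C =
      {X | A.IsFlat X ∧ X ⊆ (affineSpan ℝ F_C : Set (EuclideanSpace ℝ (Fin n)))})
    (c : A.Cell) :
    (A.inN lt C c ∧ A.IsOpp c.C c.F E) ↔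
      (A.IsOpp E c.F c.C ∧ c.F ⊆ (affineSpan ℝ F_C : Set (EuclideanSpace ℝ (Fin n))) ∧
        A.supp c.F ⊆ A.sep C E) := by
  obtain ⟨xC, hxC, rfl⟩ := hC
  obtain ⟨xE, hxE, rfl⟩ := hE
  rcases c with ⟨D, F, hDch, hFface, hFsub⟩
  obtain ⟨xD, hxD, rfl⟩ := hDch
  obtain ⟨z, rfl⟩ := hFface
  simp only [Arrangement.inN, Arrangement.inS, Arrangement.IsCF, Arrangement.IsOpp]
  -- abbreviations
  set σC := A.signAt xC with hσC
  set σE := A.signAt xE with hσE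
  set σD := A.signAt xD with hσD
  set τ := A.signAt z with hτv
  set Cs := closure (A.openCell σC) with hCs
  set Es := closure (A.openCell σE) with hEs
  set Ds := closure (A.openCell σD) with hDs
  set Fs := closure (A.openCell τ) with hFs
  have hsupp : A.supp Fs = {i | τ i = 0} := A.supp_face z
  have sepCE : ∀ i, i ∈ A.sep Cs Es ↔ σC i ≠ σE i := fun i => A.mem_sep_iff hxC hxE i
  have sepDE : ∀ i, i ∈ A.sep Ds Es ↔ σD i ≠ σE i := fun i => A.mem_sep_iff hxD hxE i
  have sepCD : ∀ i, i ∈ A.sep Cs Ds ↔ σC i ≠ σD i := fun i => A.mem_sep_iff hxC hxD i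
  have compatD : ∀ i, τ i = 0 ∨ τ i = σD i := A.compat_of_face_subset hxD hFsub
  have hCch : A.IsChamber Cs := ⟨xC, hxC, rfl⟩
  have hEch : A.IsChamber Es := ⟨xE, hxE, rfl⟩
  have hDch : A.IsChamber Ds := ⟨xD, hxD, rfl⟩
  have hσCne : ∀ i, σC i ≠ 0 := A.signAt_ne_zero hxC
  have hσEne : ∀ i, σE i ≠ 0 := A.signAt_ne_zero hxE
  have hσDne : ∀ i, σD i ≠ 0 := A.signAt_ne_zero hxD
  -- the flat X
  set X : Set (EuclideanSpace ℝ (Fin n)) := {x | ∀ i, τ i = 0 → A.val i x = 0} with hX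
  have hzX : z ∈ X := by
    intro i hi
    exact sign_eq_zero_iff.1 hi
  have hXflat : A.IsFlat X := by
    refine ⟨⟨z, hzX⟩, ⟨{i | τ i = 0}, ?_⟩⟩
    ext x
    simp [hX, Arrangement.hyperplane]
  have hFX : Fs ⊆ X := by
    intro w hw i hi
    have hm : i ∈ A.supp Fs := by rw [hsupp]; exact hi
    exact hm hw
  have hXspan : X ⊆ (affineSpan ℝ (A.openCell τ) : Set (EuclideanSpace ℝ (Fin n))) :=
    A.flat_subset_span z
  constructor
  · rintro ⟨⟨⟨_, hFD, hsepCD0⟩, hmin⟩, _, hFE, hsepDE0⟩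
    have eqCD : ∀ i, τ i = 0 → σC i = σD i := by
      intro i hi
      by_contra hne
      have : i ∈ A.sep Cs Ds := (sepCD i).2 hne
      exact (Set.eq_empty_iff_forall_notMem.1 hsepCD0 i) ⟨this, by rw [hsupp]; exact hi⟩
    refine ⟨⟨hDch, hFsub, by rw [A.sep_comm]; exact hsepDE0⟩, ?_, ?_⟩
    · -- F ⊆ affineSpan F_C via X ∈ J(C)
      have hXJ : X ∈ A.J lt Cs := by
        refine ⟨hXflat, fun C' hC' hlt => ?_⟩
        obtain ⟨x', hx', rfl⟩ := hC'
        have hne : (A.sep (closure (A.openCell (A.signAt x'))) Ds ∩ A.supp Fs).Nonempty := by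
          rw [Set.nonempty_iff_ne_empty]
          intro h
          exact hmin _ ⟨x', hx', rfl⟩ hlt ⟨hDch, hFD, h⟩
        obtain ⟨i, hisep, hisupp⟩ := hne
        have hτi : τ i = 0 := by rw [hsupp] at hisupp; exact hisupp
        have hσ' : A.signAt x' i ≠ σD i := (A.mem_sep_iff hx' hxD i).1 hisep
        refine ⟨i, ?_, ?_⟩
        · -- i ∈ supp X
          intro w hw
          exact hw i hτi
        · exact (A.mem_sep_iff hxC hx' i).2 (fun h => hσ' (h.symm.trans (eqCD i hτi)))
      rw [hJ] at hXJ
      exact hFX.trans hXJ.2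
    · -- supp F ⊆ sep C E
      intro i hi
      have hτi : τ i = 0 := by rw [hsupp] at hi; exact hi
      have hDE : σD i ≠ σE i := (sepDE i).1 (by rw [hsepDE0]; exact hi)
      exact (sepCE i).2 (fun h => hDE ((eqCD i hτi).symm.trans h))
  · rintro ⟨⟨_, hFD, hsepED0⟩, hspan, hsuppsep⟩
    have hsepDE0 : A.sep Ds Es = A.supp Fs := by rw [A.sep_comm]; exact hsepED0
    have eqCD : ∀ i, τ i = 0 → σC i = σD i := by
      intro i hi
      have h1 : σC i ≠ σE i := (sepCE i).1 (hsuppsep (by rw [hsupp]; exact hi))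
      have h2 : σD i ≠ σE i := (sepDE i).1 (by rw [hsepDE0, hsupp]; exact hi)
      exact Arrangement.signType_eq_of (hσCne i) (hσDne i) (hσEne i) h1 h2
    have hXJ : X ∈ A.J lt Cs := by
      rw [hJ]
      refine ⟨hXflat, hXspan.trans ?_⟩
      have h1 : A.openCell τ ⊆ (affineSpan ℝ F_C : Set (EuclideanSpace ℝ (Fin n))) :=
        (subset_closure : A.openCell τ ⊆ Fs).trans hspan
      exact_mod_cast (affineSpan_le.2 h1 : affineSpan ℝ (A.openCell τ) ≤ affineSpan ℝ F_C)
    refine ⟨⟨⟨hDch, hFsub, ?_⟩, ?_⟩, hEch, ?_, hsepDE0⟩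
    · -- sep C D ∩ supp F = ∅
      rw [Set.eq_empty_iff_forall_notMem]
      rintro i ⟨h1, h2⟩
      have hτi : τ i = 0 := by rw [hsupp] at h2; exact h2
      exact ((sepCD i).1 h1) (eqCD i hτi)
    · -- minimality
      rintro C' hC' hlt ⟨_, _, hsep'⟩
      obtain ⟨x', hx', rfl⟩ := hC'
      obtain ⟨i, hiX, hiCC'⟩ := hXJ.2 _ ⟨x', hx', rfl⟩ hlt
      have hτi : τ i = 0 := by
        have : A.val i z = 0 := hiX hzX
        exact sign_eq_zero_iff.2 this
      have hCC' : σC i ≠ A.signAt x' i := (A.mem_sep_iff hxC hx' i).1 hiCC'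
      have : i ∈ A.sep (closure (A.openCell (A.signAt x'))) Ds ∩ A.supp Fs := by
        refine ⟨(A.mem_sep_iff hx' hxD i).2 ?_, by rw [hsupp]; exact hτi⟩
        intro h
        exact hCC' ((eqCD i hτi).trans h.symm)
      rw [hsep'] at this
      exact this
    · -- F ⊆ E
      have compatE : ∀ i, τ i = 0 ∨ τ i = σE i := by
        intro i
        by_cases hτi : τ i = 0
        · exact Or.inl hτi
        right
        have hns : i ∉ A.supp Fs := by rw [hsupp]; exact hτi
        have : σD i = σE i := by
          by_contra hne
          exact hns (hsepDE0 ▸ (sepDE i).2 hne)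
        rcases compatD i with h | h
        · exact absurd h hτi
        · rw [h, this]
      exact A.face_subset_of_compat compatE
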